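/- (Helstrom) Let ρ₀ and ρ₁ be density matrices on ℂ^d, let q ∈ [0,1], and let μ₁, …, μ_d be the eigenvalues of the Hermitian matrix Λ := q·ρ₀ − (1−q)·ρ₁. Then the supremum, over all pairs (E₀, E₁) of positive semidefinite complex d×d matrices with E₀ + E₁ = I, of q·tr(E₀ρ₀) + (1−q)·tr(E₁ρ₁) equals 1/2 + (1/2)·Σ_{i=1}^d |μ_i|. -/

import Mathlib

open Finset ComplexOrder Matrix

private lemma psd_diag_nonneg' {d : ℕ} {M : Matrix (Fin d) (Fin d) ℂ}
    (hM : M.PosSemidef) (i : Fin d) : 0 ≤ M i i := by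
  exact hM.diag_nonneg

/-- **Helstrom's theorem (paper: Theorem `thm:helstrom`)**: for density matrices
`ρ₀, ρ₁` on `ℂ^d`, `q ∈ [0,1]`, and `μ₁,…,μ_d` the eigenvalues of the Hermitian matrix
`Λ := q•ρ₀ - (1-q)•ρ₁`, the supremum over all binary POVMs `(E₀,E₁)` (pairs of positive
semidefinite matrices with `E₀ + E₁ = I`) of `q·tr(E₀ρ₀) + (1-q)·tr(E₁ρ₁)` is
`1/2 + (1/2)·∑ᵢ|μᵢ|`. -/
theorem helstrom {d : ℕ} (q : ℝ) (hq0 : 0 ≤ q) (hq1 : q ≤ 1)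
    (ρ₀ ρ₁ : Matrix (Fin d) (Fin d) ℂ)
    (h0 : ρ₀.PosSemidef) (h0t : ρ₀.trace = 1)
    (h1 : ρ₁.PosSemidef) (h1t : ρ₁.trace = 1)
    (hΛ : ((q : ℂ) • ρ₀ - ((1 - q : ℝ) : ℂ) • ρ₁).IsHermitian) :
    sSup {p : ℝ | ∃ E₀ E₁ : Matrix (Fin d) (Fin d) ℂ,
        E₀.PosSemidef ∧ E₁.PosSemidef ∧ E₀ + E₁ = 1 ∧
        (p : ℂ) = (q : ℂ) * (E₀ * ρ₀).trace + ((1 - q : ℝ) : ℂ) * (E₁ * ρ₁).trace}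
      = 1 / 2 + (1 / 2) * ∑ i, |hΛ.eigenvalues i| := by
  classical
  set Λ : Matrix (Fin d) (Fin d) ℂ := (q : ℂ) • ρ₀ - ((1 - q : ℝ) : ℂ) • ρ₁ with hΛdef
  set U : Matrix (Fin d) (Fin d) ℂ := (hΛ.eigenvectorUnitary : Matrix (Fin d) (Fin d) ℂ)
    with hUdef
  set μ : Fin d → ℝ := hΛ.eigenvalues with hμdef
  have hU1 : U * Uᴴ = 1 := by
    rw [← Matrix.star_eq_conjTranspose]
    exact Matrix.mem_unitaryGroup_iff.mp hΛ.eigenvectorUnitary.2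
  have hU2 : Uᴴ * U = 1 := by
    rw [← Matrix.star_eq_conjTranspose]
    exact Matrix.mem_unitaryGroup_iff'.mp hΛ.eigenvectorUnitary.2
  have hspec : Λ = U * Matrix.diagonal (fun i => (μ i : ℂ)) * Uᴴ := by
    have := hΛ.spectral_theorem
    rw [Unitary.conjStarAlgAut_apply] at this
    rw [← Matrix.star_eq_conjTranspose]
    exact this
  -- trace of Λ
  have htrΛ : Λ.trace = ((2 * q - 1 : ℝ) : ℂ) := by
    rw [hΛdef, Matrix.trace_sub, Matrix.trace_smul, Matrix.trace_smul, h0t, h1t,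
      smul_eq_mul, smul_eq_mul]
    push_cast; ring
  have hsumμ : ∑ i, μ i = 2 * q - 1 := by
    have h2 : Λ.trace = ∑ i, (μ i : ℂ) := by
      rw [hspec, Matrix.trace_mul_cycle, hU2, Matrix.one_mul, Matrix.trace_diagonal]
    rw [htrΛ] at h2
    exact_mod_cast h2.symm
  -- key algebraic identity
  have key : ∀ E₀ E₁ : Matrix (Fin d) (Fin d) ℂ, E₀ + E₁ = 1 →
      (q : ℂ) * (E₀ * ρ₀).trace + ((1 - q : ℝ) : ℂ) * (E₁ * ρ₁).trace
        = ((1 - q : ℝ) : ℂ) + (E₀ * Λ).trace := by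
    intro E₀ E₁ hs
    have hE1 : E₁ = 1 - E₀ := by rw [← hs]; abel
    have hmul : E₀ * Λ = (q : ℂ) • (E₀ * ρ₀) - ((1 - q : ℝ) : ℂ) • (E₀ * ρ₁) := by
      rw [hΛdef, Matrix.mul_sub, Matrix.mul_smul, Matrix.mul_smul]
    rw [hE1, Matrix.sub_mul, Matrix.one_mul, Matrix.trace_sub, hmul, Matrix.trace_sub,
      Matrix.trace_smul, Matrix.trace_smul, h1t, smul_eq_mul, smul_eq_mul]
    ring
  set S : Set ℝ := {p : ℝ | ∃ E₀ E₁ : Matrix (Fin d) (Fin d) ℂ,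
      E₀.PosSemidef ∧ E₁.PosSemidef ∧ E₀ + E₁ = 1 ∧
      (p : ℂ) = (q : ℂ) * (E₀ * ρ₀).trace + ((1 - q : ℝ) : ℂ) * (E₁ * ρ₁).trace} with hSdef
  set R : ℝ := 1 / 2 + (1 / 2) * ∑ i, |μ i| with hRdef
  -- upper bound
  have hub : ∀ p ∈ S, p ≤ R := by
    rintro p ⟨E₀, E₁, hE₀, hE₁, hs, hp⟩
    set M : Matrix (Fin d) (Fin d) ℂ := Uᴴ * E₀ * U with hMdef
    set N : Matrix (Fin d) (Fin d) ℂ := Uᴴ * E₁ * U with hNdef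
    have hMpsd : M.PosSemidef := hE₀.conjTranspose_mul_mul_same U
    have hNpsd : N.PosSemidef := hE₁.conjTranspose_mul_mul_same U
    have hMN : M + N = 1 := by
      have : M + N = Uᴴ * (E₀ + E₁) * U := by
        rw [Matrix.mul_add, Matrix.add_mul]
      rw [this, hs, Matrix.mul_one, hU2]
    -- trace formula
    have htr : (E₀ * Λ).trace = ∑ i, M i i * (μ i : ℂ) := by
      calc (E₀ * Λ).trace = (Uᴴ * (E₀ * (U * Matrix.diagonal (fun i => (μ i : ℂ))))).trace := by
            rw [hspec, ← Matrix.mul_assoc, ← Matrix.mul_assoc, Matrix.trace_mul_comm]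
        _ = (M * Matrix.diagonal (fun i => (μ i : ℂ))).trace := by
            rw [hMdef, Matrix.mul_assoc, Matrix.mul_assoc]
        _ = ∑ i, M i i * (μ i : ℂ) := by
            simp [Matrix.trace, Matrix.diag, Matrix.mul_diagonal]
    -- diagonal entries of M are real in [0,1]
    set r : Fin d → ℝ := fun i => (M i i).re with hrdef
    have hMr : ∀ i, M i i = (r i : ℂ) := by
      intro i
      have h := psd_diag_nonneg' hMpsd i
      rw [Complex.nonneg_iff] at h
      exact Complex.ext rfl h.2.symm
    have hr0 : ∀ i, 0 ≤ r i := fun i => ((Complex.nonneg_iff.mp (psd_diag_nonneg' hMpsd i)).1)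
    have hr1 : ∀ i, r i ≤ 1 := by
      intro i
      have h := psd_diag_nonneg' hNpsd i
      rw [Complex.nonneg_iff] at h
      have h2 : M i i + N i i = 1 := by
        have := congrFun (congrFun hMN i) i
        simpa [Matrix.one_apply] using this
      have h3 := congrArg Complex.re h2
      simp only [Complex.add_re, Complex.one_re] at h3
      have : r i + (N i i).re = 1 := h3
      linarith [h.1]
    -- real form of p
    have hpreal : p = (1 - q) + ∑ i, r i * μ i := by
      have h1' : (p : ℂ) = ((1 - q : ℝ) : ℂ) + ∑ i, ((r i * μ i : ℝ) : ℂ) := by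
        rw [hp, key E₀ E₁ hs, htr]
        congr 1
        refine Finset.sum_congr rfl fun i _ => ?_
        rw [hMr i]; push_cast; ring
      have h2' : (p : ℂ) = (((1 - q) + ∑ i, r i * μ i : ℝ) : ℂ) := by
        rw [h1']; push_cast; ring
      exact_mod_cast h2'
    have hbound : ∑ i, r i * μ i ≤ ∑ i, (μ i + |μ i|) / 2 := by
      refine Finset.sum_le_sum fun i _ => ?_
      rcases le_or_gt 0 (μ i) with h | h
      · rw [abs_of_nonneg h]
        nlinarith [hr0 i, hr1 i]
      · rw [abs_of_neg h]
        nlinarith [hr0 i, hr1 i]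
    have hsplit : ∑ i, (μ i + |μ i|) / 2 = (2 * q - 1) / 2 + (∑ i, |μ i|) / 2 := by
      rw [← hsumμ, ← Finset.sum_div, Finset.sum_add_distrib, add_div]
    rw [hpreal, hRdef]
    calc (1 - q) + ∑ i, r i * μ i ≤ (1 - q) + ((2 * q - 1) / 2 + (∑ i, |μ i|) / 2) := by
          rw [← hsplit]; linarith [hbound]
      _ = 1 / 2 + (1 / 2) * ∑ i, |μ i| := by ring
  -- achiever
  have hmem : R ∈ S := by
    set c : Fin d → ℝ := fun i => if 0 < μ i then 1 else 0 with hcdef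
    refine ⟨U * Matrix.diagonal (fun i => (c i : ℂ)) * Uᴴ,
            U * Matrix.diagonal (fun i => ((1 - c i : ℝ) : ℂ)) * Uᴴ, ?_, ?_, ?_, ?_⟩
    · refine (Matrix.PosSemidef.diagonal ?_).mul_mul_conjTranspose_same U
      intro i
      show (0:ℂ) ≤ ((c i : ℝ) : ℂ)
      rw [Complex.zero_le_real, hcdef]
      positivity
    · refine (Matrix.PosSemidef.diagonal ?_).mul_mul_conjTranspose_same U
      intro i
      show (0:ℂ) ≤ ((1 - c i : ℝ) : ℂ)
      rw [Complex.zero_le_real, hcdef]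
      dsimp only
      split <;> norm_num
    · have : (Matrix.diagonal (fun i => (c i : ℂ)) + Matrix.diagonal (fun i => ((1 - c i : ℝ) : ℂ)))
          = (1 : Matrix (Fin d) (Fin d) ℂ) := by
        rw [Matrix.diagonal_add, ← Matrix.diagonal_one]
        congr 1
        funext i
        push_cast; ring
      rw [← Matrix.add_mul, ← Matrix.mul_add, this, Matrix.mul_one, hU1]
    · set E₀ := U * Matrix.diagonal (fun i => (c i : ℂ)) * Uᴴ with hE₀def
      set E₁ := U * Matrix.diagonal (fun i => ((1 - c i : ℝ) : ℂ)) * Uᴴ with hE₁def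
      have hs : E₀ + E₁ = 1 := by
        have h4 : (Matrix.diagonal (fun i => (c i : ℂ))
            + Matrix.diagonal (fun i => ((1 - c i : ℝ) : ℂ)))
            = (1 : Matrix (Fin d) (Fin d) ℂ) := by
          rw [Matrix.diagonal_add, ← Matrix.diagonal_one]
          congr 1
          funext i
          push_cast; ring
        rw [hE₀def, hE₁def, ← Matrix.add_mul, ← Matrix.mul_add, h4, Matrix.mul_one, hU1]
      rw [key E₀ E₁ hs]
      have htr : (E₀ * Λ).trace = ∑ i, ((c i * μ i : ℝ) : ℂ) := by
        have hE₀Λ : E₀ * Λ = U * (Matrix.diagonal (fun i => (c i : ℂ))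
            * Matrix.diagonal (fun i => (μ i : ℂ))) * Uᴴ := by
          rw [hE₀def, hspec]
          calc U * Matrix.diagonal (fun i => (c i : ℂ)) * Uᴴ
                * (U * Matrix.diagonal (fun i => (μ i : ℂ)) * Uᴴ)
              = U * Matrix.diagonal (fun i => (c i : ℂ)) * (Uᴴ * U)
                * Matrix.diagonal (fun i => (μ i : ℂ)) * Uᴴ := by
                simp only [Matrix.mul_assoc]
            _ = U * (Matrix.diagonal (fun i => (c i : ℂ))
                * Matrix.diagonal (fun i => (μ i : ℂ))) * Uᴴ := by
                rw [hU2, Matrix.mul_one]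
                simp only [Matrix.mul_assoc]
        rw [hE₀Λ, Matrix.trace_mul_cycle, ← Matrix.mul_assoc, hU2, Matrix.one_mul,
          Matrix.diagonal_mul_diagonal, Matrix.trace_diagonal]
        push_cast
        rfl
      have hsum' : ∑ i, c i * μ i = (2 * q - 1) / 2 + (∑ i, |μ i|) / 2 := by
        have : ∑ i, c i * μ i = ∑ i, (μ i + |μ i|) / 2 := by
          refine Finset.sum_congr rfl fun i _ => ?_
          rw [hcdef]
          dsimp only
          rcases lt_or_ge 0 (μ i) with h | h
          · rw [if_pos h, abs_of_pos h]; ring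
          · rw [if_neg (not_lt.mpr h), abs_of_nonpos h]; ring
        rw [this, ← Finset.sum_div, Finset.sum_add_distrib, add_div, hsumμ]
      rw [htr]
      have : ((R : ℝ) : ℂ) = (((1 - q) + ∑ i, c i * μ i : ℝ) : ℂ) := by
        rw [hRdef, hsum']
        push_cast; ring
      rw [this]
      push_cast
      ring
  -- conclude
  have hne : S.Nonempty := ⟨R, hmem⟩
  have hbdd : BddAbove S := ⟨R, fun p hp => hub p hp⟩
  exact le_antisymm (csSup_le hne hub) (le_csSup hbdd hmem)
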